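/- Let (L,Δ,S) be a locality and K a partial normal subgroup. The relation ↑_K on L∘Δ = {(f,P) ∈ L × Δ : P ≤ S_f}, defined by (f,P) ↑_K (g,Q) iff there exist x ∈ N_K(P,Q) and y ∈ N_K(P^f,Q^g) with xg = fy (both products defined in L), is reflexive and transitive. Moreover (f,P) ↑_K (f,S_f) via (1,1) for every (f,P) ∈ L∘Δ. -/

import Mathlib

universe u v w

/-- A partial group in the sense of Chermak: a set `L` with a set `D` of words,
a (total, but only meaningful on `D`) product `prod`, and an involutory inversion. -/
structure PartialGroup (L : Type u) where
  D : Set (List L)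
  prod : List L → L
  inv : L → L
  nil_mem : ([] : List L) ∈ D
  single_mem : ∀ f : L, [f] ∈ D
  append_closed : ∀ u v : List L, u ++ v ∈ D → u ∈ D ∧ v ∈ D
  prod_single : ∀ f : L, prod [f] = f
  prod_assoc : ∀ u v w : List L, u ++ v ++ w ∈ D →
    (u ++ [prod v] ++ w ∈ D ∧ prod (u ++ v ++ w) = prod (u ++ [prod v] ++ w))
  inv_inv : ∀ f : L, inv (inv f) = f
  inv_word_mem : ∀ u ∈ D, (u.reverse.map inv) ++ u ∈ D
  prod_inv_word : ∀ u ∈ D, prod ((u.reverse.map inv) ++ u) = prod []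

namespace PartialGroup

variable {L : Type u} (PG : PartialGroup L)

/-- The identity element `1 = Π(∅)`. -/
def one : L := PG.prod []

/-- Conjugation `x^g = Π(g⁻¹, x, g)` (only meaningful when `(g⁻¹,x,g) ∈ D`). -/
def conj (g x : L) : L := PG.prod [PG.inv g, x, g]

/-- `D(g)`: the set of `x` for which conjugation by `g` is defined. -/
def Dset (g : L) : Set L := {x | [PG.inv g, x, g] ∈ PG.D}

/-- `P^g`, the image of a subset under conjugation by `g`. -/
def conjSet (g : L) (P : Set L) : Set L := PG.conj g '' P

/-- A partial subgroup: nonempty, closed under inversion and under defined products. -/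
def IsPartialSubgroup (H : Set L) : Prop :=
  H.Nonempty ∧ (∀ h ∈ H, PG.inv h ∈ H) ∧
    ∀ v ∈ PG.D, (∀ x ∈ v, x ∈ H) → PG.prod v ∈ H

/-- A partial normal subgroup: a partial subgroup closed under defined conjugation. -/
def IsPartialNormal (N : Set L) : Prop :=
  PG.IsPartialSubgroup N ∧ ∀ x ∈ N, ∀ f : L, x ∈ PG.Dset f → PG.conj f x ∈ N

/-- A subgroup of a partial group: a partial subgroup all of whose words lie in `D`. -/
def IsSubgroup (H : Set L) : Prop :=
  PG.IsPartialSubgroup H ∧ ∀ w : List L, (∀ x ∈ w, x ∈ H) → w ∈ PG.D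

/-- A `p`-subgroup: a subgroup of `p`-power order. -/
def IsPSubgroup (p : ℕ) (H : Set L) : Prop :=
  PG.IsSubgroup H ∧ ∃ k : ℕ, Nat.card H = p ^ k

/-- The product `MN = {Π(m,n) : m ∈ M, n ∈ N, (m,n) ∈ D}` of two subsets. -/
def setProd (M N : Set L) : Set L :=
  {z | ∃ m ∈ M, ∃ n ∈ N, [m, n] ∈ PG.D ∧ z = PG.prod [m, n]}

/-- The product `N₁N₂⋯N_l` of a family of subsets. -/
def multiProd {l : ℕ} (N : Fin l → Set L) : Set L :=
  {z | ∃ n : Fin l → L, List.ofFn n ∈ PG.D ∧ (∀ i, n i ∈ N i) ∧ z = PG.prod (List.ofFn n)}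

/-- A word is in `D` via a chain of groups from `Δ`. -/
def InDVia (Δ : Set (Set L)) (wrd : List L) : Prop :=
  ∃ P : Fin (wrd.length + 1) → Set L, (∀ i, P i ∈ Δ) ∧
    ∀ i : Fin wrd.length,
      P i.castSucc ⊆ PG.Dset (wrd.get i) ∧ PG.conjSet (wrd.get i) (P i.castSucc) = P i.succ

/-- `S_g = {s ∈ S : (g⁻¹,s,g) ∈ D and s^g ∈ S}`. -/
def Sg (S : Set L) (g : L) : Set L :=
  {s ∈ S | s ∈ PG.Dset g ∧ PG.conj g s ∈ S}

/-- `S_w` for a word `w = (g₁,…,gₙ)`: those `s ∈ S` admitting a chain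
`s = x₀, x₁, …, xₙ ∈ S` with `x_{i-1}^{g_i} = x_i`. -/
def Sw (S : Set L) (wrd : List L) : Set L :=
  {s ∈ S | ∃ x : Fin (wrd.length + 1) → L, (∀ i, x i ∈ S) ∧ x 0 = s ∧
    ∀ i : Fin wrd.length,
      x i.castSucc ∈ PG.Dset (wrd.get i) ∧ PG.conj (wrd.get i) (x i.castSucc) = x i.succ}

/-- The (right) coset `Kf = {kf : k ∈ K, (k,f) ∈ D}`. -/
def coset (K : Set L) (f : L) : Set L :=
  {z | ∃ k ∈ K, [k, f] ∈ PG.D ∧ z = PG.prod [k, f]}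

/-- A maximal coset of `K`: a coset maximal under inclusion among cosets of `K`. -/
def IsMaxCoset (K C : Set L) : Prop :=
  (∃ f, C = PG.coset K f) ∧ ∀ g : L, C ⊆ PG.coset K g → C = PG.coset K g

/-- `f` and `g` lie in a common maximal coset of `K`, i.e. `f̄ = ḡ` in `L/K`. -/
def SameMaxCoset (K : Set L) (f g : L) : Prop :=
  ∃ C, PG.IsMaxCoset K C ∧ f ∈ C ∧ g ∈ C

/-- `N_K(P,Q) = {x ∈ K : P ⊆ D(x), P^x ≤ Q}`. -/
def NBetween (K P Q : Set L) : Set L :=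
  {x ∈ K | P ⊆ PG.Dset x ∧ PG.conjSet x P ⊆ Q}

/-- The normalizer `N_A(R) = {a ∈ A : R ⊆ D(a), R^a = R}`. -/
def NIn (A R : Set L) : Set L :=
  {a ∈ A | R ⊆ PG.Dset a ∧ PG.conjSet a R = R}

end PartialGroup

/-- A locality `(L, Δ, S)` in the sense of Chermak. -/
structure Locality (L : Type u) extends PartialGroup L where
  finite : Finite L
  p : ℕ
  p_prime : p.Prime
  S : Set L
  Δ : Set (Set L)
  Δ_nonempty : Δ.Nonempty
  Δ_subgroups : ∀ P ∈ Δ, P ⊆ S ∧ toPartialGroup.IsSubgroup P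
  L1 : toPartialGroup.IsPSubgroup p S ∧
    ∀ T : Set L, toPartialGroup.IsPSubgroup p T → S ⊆ T → S = T
  L2 : ∀ wrd : List L, wrd ∈ toPartialGroup.D ↔ toPartialGroup.InDVia Δ wrd
  L3 : ∀ Q : Set L, Q ⊆ S → toPartialGroup.IsSubgroup Q →
    (∃ P ∈ Δ, ∃ g : L, P ⊆ toPartialGroup.Dset g ∧ toPartialGroup.conjSet g P ⊆ Q) → Q ∈ Δ

namespace Locality

variable {L : Type u} (Loc : Locality L)

/-- `S_g` for the locality. -/
def Sg (g : L) : Set L := Loc.toPartialGroup.Sg Loc.S g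

/-- `S_w` for the locality. -/
def Sw (wrd : List L) : Set L := Loc.toPartialGroup.Sw Loc.S wrd

/-- The domain `L∘Δ` of the relation `↑_K`: pairs `(f,P)` with `P ∈ Δ` and `P ≤ S_f`. -/
def LDelta : Set (L × Set L) := {fP | fP.2 ∈ Loc.Δ ∧ fP.2 ⊆ Loc.Sg fP.1}

/-- Chermak's relation `↑_K` on `L∘Δ`: `(f,P) ↑_K (g,Q)` iff there are
`x ∈ N_K(P,Q)` and `y ∈ N_K(P^f,Q^g)` with `xg = fy`. -/
def UpRel (K : Set L) (fP gQ : L × Set L) : Prop :=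
  ∃ x ∈ Loc.toPartialGroup.NBetween K fP.2 gQ.2,
    ∃ y ∈ Loc.toPartialGroup.NBetween K
        (Loc.toPartialGroup.conjSet fP.1 fP.2) (Loc.toPartialGroup.conjSet gQ.1 gQ.2),
      [x, gQ.1] ∈ Loc.toPartialGroup.D ∧ [fP.1, y] ∈ Loc.toPartialGroup.D ∧
        Loc.toPartialGroup.prod [x, gQ.1] = Loc.toPartialGroup.prod [fP.1, y]

/-- `f` is `↑_K`-maximal. -/
def UpMaximal (K : Set L) (f : L) : Prop :=
  ∀ gQ ∈ Loc.LDelta, Loc.UpRel K (f, Loc.Sg f) gQ → Loc.UpRel K gQ (f, Loc.Sg f)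

end Locality

/-- `ρ : L → L'` realizes `Loc'` as the quotient locality `L/K`:
it is a surjective homomorphism of partial groups with kernel `K`, whose fibers
are the maximal cosets of `K`, and with `D̄ = Dρ*`, `S̄ = Sρ`, `Δ̄ = {P̄ : P ∈ Δ}`. -/
structure IsQuotientMap {L : Type u} {L' : Type v} (Loc : Locality L) (K : Set L)
    (Loc' : Locality L') (ρ : L → L') : Prop where
  surj : Function.Surjective ρ
  D_eq : Loc'.D = (fun wrd : List L => wrd.map ρ) '' Loc.D
  hom : ∀ wrd ∈ Loc.D, Loc'.toPartialGroup.prod (wrd.map ρ) = ρ (Loc.toPartialGroup.prod wrd)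
  ker : ∀ f : L, ρ f = ρ Loc.toPartialGroup.one ↔ f ∈ K
  fiber : ∀ f g : L, ρ f = ρ g ↔ Loc.toPartialGroup.SameMaxCoset K f g
  S_eq : Loc'.S = ρ '' Loc.S
  Δ_eq : Loc'.Δ = (fun P : Set L => ρ '' P) '' Loc.Δ
  p_eq : Loc'.p = Loc.p

namespace PartialGroup

variable {L : Type u} (PG : PartialGroup L)

lemma one_def : PG.one = PG.prod [] := rfl

lemma one_pair_left (f : L) :
    [PG.one, f] ∈ PG.D ∧ PG.prod [PG.one, f] = f := by
  have h := PG.prod_assoc [] [] [f] (by simpa using PG.single_mem f)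
  simp only [List.nil_append, List.singleton_append] at h
  rw [one_def]
  exact ⟨h.1, by rw [← h.2, PG.prod_single]⟩

lemma one_pair_right (f : L) :
    [f, PG.one] ∈ PG.D ∧ PG.prod [f, PG.one] = f := by
  have h := PG.prod_assoc [f] [] [] (by simpa using PG.single_mem f)
  simp only [List.append_nil, List.cons_append, List.nil_append] at h
  rw [one_def]
  exact ⟨h.1, by rw [← h.2, PG.prod_single]⟩

lemma inv_mul_pair (f : L) :
    [PG.inv f, f] ∈ PG.D ∧ PG.prod [PG.inv f, f] = PG.one := by
  have h1 := PG.inv_word_mem [f] (PG.single_mem f)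
  have h2 := PG.prod_inv_word [f] (PG.single_mem f)
  simp only [List.reverse_singleton, List.map_cons, List.map_nil, List.singleton_append] at h1 h2
  exact ⟨h1, h2⟩

lemma mul_inv_pair (f : L) :
    [f, PG.inv f] ∈ PG.D ∧ PG.prod [f, PG.inv f] = PG.one := by
  have h := PG.inv_mul_pair (PG.inv f)
  rwa [PG.inv_inv] at h

lemma inv_one_eq : PG.inv PG.one = PG.one := by
  have h := PG.inv_mul_pair PG.one
  have h2 := (PG.one_pair_right (PG.inv PG.one)).2
  rw [h2] at h
  exact h.2

lemma map_inv_map_inv (l : List L) : (l.map PG.inv).map PG.inv = l := by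
  rw [List.map_map]
  have : PG.inv ∘ PG.inv = id := by funext x; exact PG.inv_inv x
  rw [this, List.map_id]

lemma rev_inv {u : List L} (hu : u ∈ PG.D) :
    (u.reverse.map PG.inv) ∈ PG.D ∧
      PG.prod (u.reverse.map PG.inv) = PG.inv (PG.prod u) := by
  have h1 : u.reverse.map PG.inv ++ u ∈ PG.D := PG.inv_word_mem u hu
  have hubD : u.reverse.map PG.inv ∈ PG.D := (PG.append_closed _ u h1).1
  have hbb : (u.reverse.map PG.inv).reverse.map PG.inv = u := by
    rw [← List.map_reverse, List.reverse_reverse, PG.map_inv_map_inv]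
  have h2 : u ++ u.reverse.map PG.inv ∈ PG.D := by
    have := PG.inv_word_mem _ hubD; rwa [hbb] at this
  have p2 : PG.prod (u ++ u.reverse.map PG.inv) = PG.one := by
    have := PG.prod_inv_word _ hubD; rw [hbb] at this; exact this
  have f1 := PG.prod_assoc [] u (u.reverse.map PG.inv) (by simpa using h2)
  simp only [List.nil_append, List.singleton_append] at f1
  have f2 := PG.prod_assoc [PG.prod u] (u.reverse.map PG.inv) [] (by simpa using f1.1)
  simp only [List.append_nil, List.cons_append, List.nil_append] at f2
  have pab : PG.prod [PG.prod u, PG.prod (u.reverse.map PG.inv)] = PG.one := by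
    rw [← f2.2, ← f1.2, p2]
  have h3 := PG.inv_word_mem _ f2.1
  simp only [List.reverse_cons, List.reverse_nil, List.nil_append, List.map_cons,
    List.singleton_append, List.map_nil, List.cons_append] at h3
  have h4 : [PG.inv (PG.prod u), PG.prod u, PG.prod (u.reverse.map PG.inv)] ∈ PG.D :=
    (PG.append_closed [PG.inv (PG.prod (u.reverse.map PG.inv))] _ (by simpa using h3)).2
  have c1 := PG.prod_assoc [PG.inv (PG.prod u)] [PG.prod u, PG.prod (u.reverse.map PG.inv)] []
    (by simpa using h4)
  simp only [List.append_nil, List.cons_append, List.nil_append] at c1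
  have c2 := PG.prod_assoc [] [PG.inv (PG.prod u), PG.prod u] [PG.prod (u.reverse.map PG.inv)]
    (by simpa using h4)
  simp only [List.cons_append, List.nil_append, List.singleton_append] at c2
  have v1 : PG.prod [PG.inv (PG.prod u), PG.prod u, PG.prod (u.reverse.map PG.inv)]
      = PG.inv (PG.prod u) := by
    rw [c1.2, pab, (PG.one_pair_right (PG.inv (PG.prod u))).2]
  have v2 : PG.prod [PG.inv (PG.prod u), PG.prod u, PG.prod (u.reverse.map PG.inv)]
      = PG.prod (u.reverse.map PG.inv) := by
    rw [c2.2, (PG.inv_mul_pair (PG.prod u)).2, (PG.one_pair_left _).2]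
  exact ⟨hubD, by rw [← v2, v1]⟩

lemma inv_pair_eq {a b : L} (h : [a, b] ∈ PG.D) :
    [PG.inv b, PG.inv a] ∈ PG.D ∧
      PG.prod [PG.inv b, PG.inv a] = PG.inv (PG.prod [a, b]) := by
  have := PG.rev_inv h
  simpa using this

lemma cancel_left {g a b : L} (h1 : [g, a] ∈ PG.D) (h2 : [g, b] ∈ PG.D)
    (he : PG.prod [g, a] = PG.prod [g, b]) : a = b := by
  have k1 := PG.inv_word_mem [g, a] h1
  simp only [List.reverse_cons, List.reverse_nil, List.nil_append, List.map_cons,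
    List.singleton_append, List.map_nil, List.cons_append] at k1
  have k1' : [PG.inv g, g, a] ∈ PG.D :=
    (PG.append_closed [PG.inv a] [PG.inv g, g, a] (by simpa using k1)).2
  have k2 := PG.inv_word_mem [g, b] h2
  simp only [List.reverse_cons, List.reverse_nil, List.nil_append, List.map_cons,
    List.singleton_append, List.map_nil, List.cons_append] at k2
  have k2' : [PG.inv g, g, b] ∈ PG.D :=
    (PG.append_closed [PG.inv b] [PG.inv g, g, b] (by simpa using k2)).2
  have d1 := PG.prod_assoc [] [PG.inv g, g] [a] (by simpa using k1')
  simp only [List.nil_append, List.singleton_append] at d1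
  have d2 := PG.prod_assoc [PG.inv g] [g, a] [] (by simpa using k1')
  simp only [List.append_nil, List.cons_append, List.nil_append] at d2
  have e1 := PG.prod_assoc [] [PG.inv g, g] [b] (by simpa using k2')
  simp only [List.nil_append, List.singleton_append] at e1
  have e2 := PG.prod_assoc [PG.inv g] [g, b] [] (by simpa using k2')
  simp only [List.append_nil, List.cons_append, List.nil_append] at e2
  calc a = PG.prod [PG.one, a] := ((PG.one_pair_left a).2).symm
    _ = PG.prod [PG.prod [PG.inv g, g], a] := by rw [(PG.inv_mul_pair g).2]
    _ = PG.prod [PG.inv g, g, a] := d1.2.symm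
    _ = PG.prod [PG.inv g, PG.prod [g, a]] := d2.2
    _ = PG.prod [PG.inv g, PG.prod [g, b]] := by rw [he]
    _ = PG.prod [PG.inv g, g, b] := e2.2.symm
    _ = PG.prod [PG.prod [PG.inv g, g], b] := e1.2
    _ = PG.prod [PG.one, b] := by rw [(PG.inv_mul_pair g).2]
    _ = b := (PG.one_pair_left b).2

end PartialGroup

namespace PartialGroup

variable {L : Type u} (PG : PartialGroup L)

lemma conj_def (g x : L) : PG.conj g x = PG.prod [PG.inv g, x, g] := rfl

lemma mem_Dset {g x : L} : x ∈ PG.Dset g ↔ [PG.inv g, x, g] ∈ PG.D := Iff.rfl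

lemma conj_invert {g s : L} (h : [PG.inv g, s, g] ∈ PG.D) :
    PG.conj g s ∈ PG.Dset (PG.inv g) ∧ PG.conj (PG.inv g) (PG.conj g s) = s := by
  have hX : [PG.inv g, PG.inv s, g] ++ [PG.inv g, s, g] ∈ PG.D := by
    have := PG.inv_word_mem _ h
    simp only [List.reverse_cons, List.reverse_nil, List.nil_append, List.map_cons,
      List.map_nil, List.cons_append, List.singleton_append, List.append_nil,
      PG.inv_inv] at this
    simpa using this
  have u1 : [g, PG.inv g, s, g] ∈ PG.D :=
    (PG.append_closed [PG.inv g, PG.inv s] [g, PG.inv g, s, g] (by simpa using hX)).2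
  have h5 := PG.inv_word_mem _ u1
  simp only [List.reverse_cons, List.reverse_nil, List.nil_append, List.map_cons,
    List.map_nil, List.cons_append, List.singleton_append, List.append_nil,
    PG.inv_inv] at h5
  have hA : [PG.inv g, PG.inv s, g, PG.inv g] ∈ PG.D :=
    (PG.append_closed [PG.inv g, PG.inv s, g, PG.inv g] [g, PG.inv g, s, g]
      (by simpa using h5)).1
  have h6 := PG.inv_word_mem _ hA
  simp only [List.reverse_cons, List.reverse_nil, List.nil_append, List.map_cons,
    List.map_nil, List.cons_append, List.singleton_append, List.append_nil,
    PG.inv_inv] at h6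
  have W5 : [g, PG.inv g, s, g, PG.inv g] ∈ PG.D :=
    (PG.append_closed [g, PG.inv g, s, g, PG.inv g] [PG.inv s, g, PG.inv g]
      (by simpa using h6)).1
  have m1 := PG.prod_assoc [g] [PG.inv g, s, g] [PG.inv g] (by simpa using W5)
  simp only [List.cons_append, List.nil_append, List.append_nil] at m1
  have n1 := PG.prod_assoc [] [g, PG.inv g] [s, g, PG.inv g] (by simpa using W5)
  simp only [List.cons_append, List.nil_append, List.append_nil] at n1
  rw [(PG.mul_inv_pair g).2] at n1
  have n2 := PG.prod_assoc [] [PG.one, s] [g, PG.inv g] (by simpa using n1.1)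
  simp only [List.cons_append, List.nil_append, List.append_nil] at n2
  rw [(PG.one_pair_left s).2] at n2
  have n3 := PG.prod_assoc [s] [g, PG.inv g] [] (by simpa using n2.1)
  simp only [List.cons_append, List.nil_append, List.append_nil] at n3
  have vW5 : PG.prod [g, PG.inv g, s, g, PG.inv g] = s := by
    rw [n1.2, n2.2, n3.2, (PG.mul_inv_pair g).2, (PG.one_pair_right s).2]
  constructor
  · rw [mem_Dset, PG.inv_inv]
    exact m1.1
  · rw [conj_def, PG.inv_inv, conj_def, ← m1.2, vW5]

lemma conj_inv_val {g s : L} (h : [PG.inv g, s, g] ∈ PG.D) :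
    [PG.inv g, PG.inv s, g] ∈ PG.D ∧ PG.conj g (PG.inv s) = PG.inv (PG.conj g s) := by
  have := PG.rev_inv h
  simp only [List.reverse_cons, List.reverse_nil, List.nil_append, List.map_cons,
    List.map_nil, List.cons_append, List.singleton_append, List.append_nil,
    PG.inv_inv] at this
  exact ⟨this.1, this.2⟩

lemma mem_Dset_one (s : L) : s ∈ PG.Dset PG.one ∧ PG.conj PG.one s = s := by
  have h1 : [PG.one, s] ∈ PG.D := (PG.one_pair_left s).1
  have h2 := PG.prod_assoc [PG.one, s] [] [] (by simpa using h1)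
  simp only [List.cons_append, List.nil_append, List.append_nil] at h2
  constructor
  · rw [mem_Dset, PG.inv_one_eq]
    exact h2.1
  · rw [conj_def, PG.inv_one_eq]
    show PG.prod [PG.one, s, PG.prod []] = s
    rw [← h2.2]; exact (PG.one_pair_left s).2

lemma conj_one_mem (g : L) : PG.one ∈ PG.Dset g ∧ PG.conj g PG.one = PG.one := by
  have h1 : [PG.inv g, g] ∈ PG.D := (PG.inv_mul_pair g).1
  have h2 := PG.prod_assoc [PG.inv g] [] [g] (by simpa using h1)
  simp only [List.cons_append, List.nil_append, List.append_nil] at h2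
  constructor
  · rw [mem_Dset]; exact h2.1
  · rw [conj_def]
    show PG.prod [PG.inv g, PG.prod [], g] = PG.one
    rw [← h2.2]; exact (PG.inv_mul_pair g).2

lemma conjSet_one (A : Set L) : PG.conjSet PG.one A = A := by
  unfold conjSet
  have : ∀ x ∈ A, PG.conj PG.one x = x := fun x _ => (PG.mem_Dset_one x).2
  rw [Set.image_congr this, Set.image_id']

lemma one_mem_partial {H : Set L} (h : PG.IsPartialSubgroup H) : PG.one ∈ H :=
  h.2.2 [] PG.nil_mem (by simp)

lemma conj_back {g : L} {A : Set L} (hA : A ⊆ PG.Dset g) :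
    PG.conjSet g A ⊆ PG.Dset (PG.inv g) ∧
      PG.conjSet (PG.inv g) (PG.conjSet g A) = A := by
  constructor
  · rintro _ ⟨s, hs, rfl⟩
    exact (PG.conj_invert (hA hs)).1
  · unfold conjSet
    rw [Set.image_image]
    have : ∀ x ∈ A, PG.conj (PG.inv g) (PG.conj g x) = x :=
      fun x hx => (PG.conj_invert (hA hx)).2
    rw [Set.image_congr this, Set.image_id']

lemma conjSet_mono {g : L} {A B : Set L} (h : A ⊆ B) : PG.conjSet g A ⊆ PG.conjSet g B :=
  Set.image_mono h

end PartialGroup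

namespace Locality

variable {L : Type u} (Loc : Locality L)

lemma S_words {w : List L} (h : ∀ x ∈ w, x ∈ Loc.S) : w ∈ Loc.toPartialGroup.D :=
  Loc.L1.1.1.2 w h

lemma S_prod {w : List L} (h : ∀ x ∈ w, x ∈ Loc.S) :
    Loc.toPartialGroup.prod w ∈ Loc.S :=
  Loc.L1.1.1.1.2.2 w (Loc.S_words h) h

lemma one_mem_S : Loc.toPartialGroup.one ∈ Loc.S :=
  Loc.toPartialGroup.one_mem_partial Loc.L1.1.1.1

lemma inv_mem_S {s : L} (h : s ∈ Loc.S) : Loc.toPartialGroup.inv s ∈ Loc.S :=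
  Loc.L1.1.1.1.2.1 s h

lemma dset_of_S {s x : L} (hs : s ∈ Loc.S) (hx : x ∈ Loc.S) :
    x ∈ Loc.toPartialGroup.Dset s :=
  Loc.S_words (by
    intro z hz
    simp only [List.mem_cons, List.not_mem_nil, or_false] at hz
    rcases hz with rfl | rfl | rfl
    · exact Loc.inv_mem_S hs
    · exact hx
    · exact hs)

lemma conj_mem_S {s x : L} (hs : s ∈ Loc.S) (hx : x ∈ Loc.S) :
    Loc.toPartialGroup.conj s x ∈ Loc.S :=
  Loc.S_prod (by
    intro z hz
    simp only [List.mem_cons, List.not_mem_nil, or_false] at hz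
    rcases hz with rfl | rfl | rfl
    · exact Loc.inv_mem_S hs
    · exact hx
    · exact hs)

lemma delta_sub_S {P : Set L} (hP : P ∈ Loc.Δ) : P ⊆ Loc.S :=
  (Loc.Δ_subgroups P hP).1

lemma delta_words {P : Set L} (hP : P ∈ Loc.Δ) {w : List L} (h : ∀ x ∈ w, x ∈ P) :
    w ∈ Loc.toPartialGroup.D :=
  (Loc.Δ_subgroups P hP).2.2 w h

lemma delta_one {P : Set L} (hP : P ∈ Loc.Δ) : Loc.toPartialGroup.one ∈ P :=
  Loc.toPartialGroup.one_mem_partial (Loc.Δ_subgroups P hP).2.1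

lemma delta_inv {P : Set L} (hP : P ∈ Loc.Δ) {s : L} (hs : s ∈ P) :
    Loc.toPartialGroup.inv s ∈ P :=
  (Loc.Δ_subgroups P hP).2.1.2.1 s hs

lemma delta_prod {P : Set L} (hP : P ∈ Loc.Δ) {w : List L} (h : ∀ x ∈ w, x ∈ P) :
    Loc.toPartialGroup.prod w ∈ P :=
  (Loc.Δ_subgroups P hP).2.1.2.2 w (Loc.delta_words hP h) h

/-- (E): a group in Δ is normalized by each of its elements. -/
lemma conj_self_delta {P : Set L} (hP : P ∈ Loc.Δ) {s : L} (hs : s ∈ P) :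
    P ⊆ Loc.toPartialGroup.Dset s ∧ Loc.toPartialGroup.conjSet s P = P := by
  have hmem : ∀ t ∈ P, [Loc.toPartialGroup.inv s, t, s] ∈ Loc.toPartialGroup.D := by
    intro t ht
    refine Loc.delta_words hP ?_
    intro z hz
    simp only [List.mem_cons, List.not_mem_nil, or_false] at hz
    rcases hz with rfl | rfl | rfl
    · exact Loc.delta_inv hP hs
    · exact ht
    · exact hs
  have hdset : P ⊆ Loc.toPartialGroup.Dset s := fun t ht => hmem t ht
  constructor
  · exact hdset
  · apply Set.Subset.antisymm
    · rintro _ ⟨t, ht, rfl⟩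
      exact Loc.delta_prod hP (by
        intro z hz
        simp only [List.mem_cons, List.not_mem_nil, or_false] at hz
        rcases hz with rfl | rfl | rfl
        · exact Loc.delta_inv hP hs
        · exact ht
        · exact hs)
    · intro t ht
      -- t = conj s (conj (inv s) t)
      have hsi : Loc.toPartialGroup.inv s ∈ P := Loc.delta_inv hP hs
      have hw : [Loc.toPartialGroup.inv (Loc.toPartialGroup.inv s), t,
          Loc.toPartialGroup.inv s] ∈ Loc.toPartialGroup.D := by
        refine Loc.delta_words hP ?_
        intro z hz
        simp only [List.mem_cons, List.not_mem_nil, or_false] at hz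
        rcases hz with rfl | rfl | rfl
        · rw [Loc.toPartialGroup.inv_inv]; exact hs
        · exact ht
        · exact hsi
      have hr : Loc.toPartialGroup.conj (Loc.toPartialGroup.inv s) t ∈ P := by
        refine Loc.delta_prod hP ?_
        intro z hz
        simp only [List.mem_cons, List.not_mem_nil, or_false] at hz
        rcases hz with rfl | rfl | rfl
        · rw [Loc.toPartialGroup.inv_inv]; exact hs
        · exact ht
        · exact hsi
      have := Loc.toPartialGroup.conj_invert hw
      rw [Loc.toPartialGroup.inv_inv] at this
      exact ⟨_, hr, this.2⟩

/-- Chain constructor for 2-letter words. -/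
lemma chain2 {a b : L} {G0 G1 G2 : Set L} (m0 : G0 ∈ Loc.Δ) (m1 : G1 ∈ Loc.Δ)
    (m2 : G2 ∈ Loc.Δ) (d0 : G0 ⊆ Loc.toPartialGroup.Dset a)
    (e0 : Loc.toPartialGroup.conjSet a G0 = G1)
    (d1 : G1 ⊆ Loc.toPartialGroup.Dset b)
    (e1 : Loc.toPartialGroup.conjSet b G1 = G2) :
    [a, b] ∈ Loc.toPartialGroup.D := by
  rw [Loc.L2]
  refine ⟨![G0, G1, G2], ?_, ?_⟩
  · intro i; fin_cases i <;> assumption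
  · intro i; fin_cases i
    · exact ⟨d0, e0⟩
    · exact ⟨d1, e1⟩

/-- Chain constructor for 3-letter words. -/
lemma chain3 {a b c : L} {G0 G1 G2 G3 : Set L} (m0 : G0 ∈ Loc.Δ) (m1 : G1 ∈ Loc.Δ)
    (m2 : G2 ∈ Loc.Δ) (m3 : G3 ∈ Loc.Δ)
    (d0 : G0 ⊆ Loc.toPartialGroup.Dset a) (e0 : Loc.toPartialGroup.conjSet a G0 = G1)
    (d1 : G1 ⊆ Loc.toPartialGroup.Dset b) (e1 : Loc.toPartialGroup.conjSet b G1 = G2)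
    (d2 : G2 ⊆ Loc.toPartialGroup.Dset c) (e2 : Loc.toPartialGroup.conjSet c G2 = G3) :
    [a, b, c] ∈ Loc.toPartialGroup.D := by
  rw [Loc.L2]
  refine ⟨![G0, G1, G2, G3], ?_, ?_⟩
  · intro i; fin_cases i <;> assumption
  · intro i; fin_cases i
    · exact ⟨d0, e0⟩
    · exact ⟨d1, e1⟩
    · exact ⟨d2, e2⟩

/-- Chain constructor for 4-letter words. -/
lemma chain4 {a b c d : L} {G0 G1 G2 G3 G4 : Set L} (m0 : G0 ∈ Loc.Δ) (m1 : G1 ∈ Loc.Δ)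
    (m2 : G2 ∈ Loc.Δ) (m3 : G3 ∈ Loc.Δ) (m4 : G4 ∈ Loc.Δ)
    (d0 : G0 ⊆ Loc.toPartialGroup.Dset a) (e0 : Loc.toPartialGroup.conjSet a G0 = G1)
    (d1 : G1 ⊆ Loc.toPartialGroup.Dset b) (e1 : Loc.toPartialGroup.conjSet b G1 = G2)
    (d2 : G2 ⊆ Loc.toPartialGroup.Dset c) (e2 : Loc.toPartialGroup.conjSet c G2 = G3)
    (d3 : G3 ⊆ Loc.toPartialGroup.Dset d) (e3 : Loc.toPartialGroup.conjSet d G3 = G4) :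
    [a, b, c, d] ∈ Loc.toPartialGroup.D := by
  rw [Loc.L2]
  refine ⟨![G0, G1, G2, G3, G4], ?_, ?_⟩
  · intro i; fin_cases i <;> assumption
  · intro i; fin_cases i
    · exact ⟨d0, e0⟩
    · exact ⟨d1, e1⟩
    · exact ⟨d2, e2⟩
    · exact ⟨d3, e3⟩

/-- Chain constructor for 5-letter words. -/
lemma chain5 {a b c d e : L} {G0 G1 G2 G3 G4 G5 : Set L} (m0 : G0 ∈ Loc.Δ)
    (m1 : G1 ∈ Loc.Δ) (m2 : G2 ∈ Loc.Δ) (m3 : G3 ∈ Loc.Δ) (m4 : G4 ∈ Loc.Δ)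
    (m5 : G5 ∈ Loc.Δ)
    (d0 : G0 ⊆ Loc.toPartialGroup.Dset a) (e0 : Loc.toPartialGroup.conjSet a G0 = G1)
    (d1 : G1 ⊆ Loc.toPartialGroup.Dset b) (e1 : Loc.toPartialGroup.conjSet b G1 = G2)
    (d2 : G2 ⊆ Loc.toPartialGroup.Dset c) (e2 : Loc.toPartialGroup.conjSet c G2 = G3)
    (d3 : G3 ⊆ Loc.toPartialGroup.Dset d) (e3 : Loc.toPartialGroup.conjSet d G3 = G4)
    (d4 : G4 ⊆ Loc.toPartialGroup.Dset e) (e4 : Loc.toPartialGroup.conjSet e G4 = G5) :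
    [a, b, c, d, e] ∈ Loc.toPartialGroup.D := by
  rw [Loc.L2]
  refine ⟨![G0, G1, G2, G3, G4, G5], ?_, ?_⟩
  · intro i; fin_cases i <;> assumption
  · intro i; fin_cases i
    · exact ⟨d0, e0⟩
    · exact ⟨d1, e1⟩
    · exact ⟨d2, e2⟩
    · exact ⟨d3, e3⟩
    · exact ⟨d4, e4⟩

end Locality

namespace Locality

variable {L : Type u} (Loc : Locality L)

lemma mem_Sg_iff {g w : L} : w ∈ Loc.Sg g ↔
    w ∈ Loc.S ∧ w ∈ Loc.toPartialGroup.Dset g ∧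
      Loc.toPartialGroup.conj g w ∈ Loc.S := by
  unfold Sg PartialGroup.Sg
  constructor
  · exact fun h => ⟨h.1, h.2.1, h.2.2⟩
  · exact fun h => ⟨h.1, h.2.1, h.2.2⟩

/-- Extract a `Δ`-chain from `(g⁻¹, w, g) ∈ D` for `w ∈ S_g`. -/
lemma sg_chain {g w : L} (hw : w ∈ Loc.Sg g) :
    ∃ Y0 Y1 Y2 Y3 : Set L, Y0 ∈ Loc.Δ ∧ Y1 ∈ Loc.Δ ∧ Y2 ∈ Loc.Δ ∧ Y3 ∈ Loc.Δ ∧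
      Y0 ⊆ Loc.toPartialGroup.Dset (Loc.toPartialGroup.inv g) ∧
      Loc.toPartialGroup.conjSet (Loc.toPartialGroup.inv g) Y0 = Y1 ∧
      Y1 ⊆ Loc.toPartialGroup.Dset w ∧ Loc.toPartialGroup.conjSet w Y1 = Y2 ∧
      Y2 ⊆ Loc.toPartialGroup.Dset g ∧ Loc.toPartialGroup.conjSet g Y2 = Y3 ∧
      Y1 ⊆ Loc.toPartialGroup.Dset g ∧ Loc.toPartialGroup.conjSet g Y1 = Y0 := by
  have hD : [Loc.toPartialGroup.inv g, w, g] ∈ Loc.toPartialGroup.D :=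
    (Loc.mem_Sg_iff.1 hw).2.1
  rw [Loc.L2] at hD
  obtain ⟨Ps, hall, hcond⟩ := hD
  have d0 : Ps ⟨0, by simp⟩ ⊆ Loc.toPartialGroup.Dset (Loc.toPartialGroup.inv g) :=
    (hcond ⟨0, by simp⟩).1
  have e0 : Loc.toPartialGroup.conjSet (Loc.toPartialGroup.inv g) (Ps ⟨0, by simp⟩)
      = Ps ⟨1, by simp⟩ := (hcond ⟨0, by simp⟩).2
  have d1 : Ps ⟨1, by simp⟩ ⊆ Loc.toPartialGroup.Dset w := (hcond ⟨1, by simp⟩).1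
  have e1 : Loc.toPartialGroup.conjSet w (Ps ⟨1, by simp⟩) = Ps ⟨2, by simp⟩ :=
    (hcond ⟨1, by simp⟩).2
  have d2 : Ps ⟨2, by simp⟩ ⊆ Loc.toPartialGroup.Dset g := (hcond ⟨2, by simp⟩).1
  have e2 : Loc.toPartialGroup.conjSet g (Ps ⟨2, by simp⟩) = Ps ⟨3, by simp⟩ :=
    (hcond ⟨2, by simp⟩).2
  have hb := Loc.toPartialGroup.conj_back (g := Loc.toPartialGroup.inv g)
    (A := Ps ⟨0, by simp⟩) d0
  rw [e0, Loc.toPartialGroup.inv_inv] at hb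
  exact ⟨Ps ⟨0, by simp⟩, Ps ⟨1, by simp⟩, Ps ⟨2, by simp⟩, Ps ⟨3, by simp⟩,
    hall _, hall _, hall _, hall _, d0, e0, d1, e1, d2, e2, hb.1, hb.2⟩

/-- Conjugation by an element of `S` is multiplicative on `S`. -/
lemma sconj_pair {u a b : L} (hu : u ∈ Loc.S) (ha : a ∈ Loc.S) (hb : b ∈ Loc.S) :
    [Loc.toPartialGroup.conj u a, Loc.toPartialGroup.conj u b] ∈ Loc.toPartialGroup.D ∧
      Loc.toPartialGroup.prod [Loc.toPartialGroup.conj u a, Loc.toPartialGroup.conj u b]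
        = Loc.toPartialGroup.conj u (Loc.toPartialGroup.prod [a, b]) := by
  set PG := Loc.toPartialGroup with hPG
  have hui : PG.inv u ∈ Loc.S := Loc.inv_mem_S hu
  have hW : [PG.inv u, a, u, PG.inv u, b, u] ∈ PG.D := by
    refine Loc.S_words ?_
    intro z hz
    simp only [List.mem_cons, List.not_mem_nil, or_false] at hz
    rcases hz with rfl | rfl | rfl | rfl | rfl | rfl <;> first | exact hui | exact ha | exact hb | exact hu
  have t1 := PG.prod_assoc [] [PG.inv u, a, u] [PG.inv u, b, u] (by simpa using hW)
  simp only [List.cons_append, List.nil_append, List.append_nil] at t1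
  have t2 := PG.prod_assoc [PG.prod [PG.inv u, a, u]] [PG.inv u, b, u] [] (by simpa using t1.1)
  simp only [List.cons_append, List.nil_append, List.append_nil] at t2
  have s1 := PG.prod_assoc [PG.inv u, a] [u, PG.inv u] [b, u] (by simpa using hW)
  simp only [List.cons_append, List.nil_append, List.append_nil] at s1
  rw [(PG.mul_inv_pair u).2] at s1
  have s2 := PG.prod_assoc [PG.inv u] [a, PG.one] [b, u] (by simpa using s1.1)
  simp only [List.cons_append, List.nil_append, List.append_nil] at s2
  rw [(PG.one_pair_right a).2] at s2
  have s3 := PG.prod_assoc [PG.inv u] [a, b] [u] (by simpa using s2.1)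
  simp only [List.cons_append, List.nil_append, List.append_nil] at s3
  refine ⟨t2.1, ?_⟩
  show PG.prod [PG.prod [PG.inv u, a, u], PG.prod [PG.inv u, b, u]]
      = PG.prod [PG.inv u, PG.prod [a, b], u]
  rw [← t2.2, ← t1.2, s1.2, s2.2, s3.2]

/-- Composition of two `S`-conjugations. -/
lemma sconj_comp {s t y : L} (hs : s ∈ Loc.S) (ht : t ∈ Loc.S) (hy : y ∈ Loc.S) :
    Loc.toPartialGroup.conj t (Loc.toPartialGroup.conj s y)
      = Loc.toPartialGroup.conj (Loc.toPartialGroup.prod [s, t]) y := by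
  set PG := Loc.toPartialGroup with hPG
  have hsi : PG.inv s ∈ Loc.S := Loc.inv_mem_S hs
  have hti : PG.inv t ∈ Loc.S := Loc.inv_mem_S ht
  have hW : [PG.inv t, PG.inv s, y, s, t] ∈ PG.D := by
    refine Loc.S_words ?_
    intro z hz
    simp only [List.mem_cons, List.not_mem_nil, or_false] at hz
    rcases hz with rfl | rfl | rfl | rfl | rfl <;>
      first | exact hti | exact hsi | exact hy | exact hs | exact ht
  have hst : [s, t] ∈ PG.D := Loc.S_words (by
    intro z hz
    simp only [List.mem_cons, List.not_mem_nil, or_false] at hz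
    rcases hz with rfl | rfl
    · exact hs
    · exact ht)
  have hip := PG.inv_pair_eq hst
  have a1 := PG.prod_assoc [PG.inv t] [PG.inv s, y, s] [t] (by simpa using hW)
  simp only [List.cons_append, List.nil_append, List.append_nil] at a1
  have a2 := PG.prod_assoc [] [PG.inv t, PG.inv s] [y, s, t] (by simpa using hW)
  simp only [List.cons_append, List.nil_append, List.append_nil] at a2
  have a3 := PG.prod_assoc [PG.prod [PG.inv t, PG.inv s], y] [s, t] [] (by simpa using a2.1)
  simp only [List.cons_append, List.nil_append, List.append_nil] at a3
  show PG.prod [PG.inv t, PG.prod [PG.inv s, y, s], t]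
      = PG.prod [PG.inv (PG.prod [s, t]), y, PG.prod [s, t]]
  rw [← a1.2, a2.2, a3.2, hip.2]

/-- `Δ` is closed under conjugation by elements of `S`. -/
lemma sconj_delta {T : Set L} {u : L} (hT : T ∈ Loc.Δ) (hu : u ∈ Loc.S) :
    Loc.toPartialGroup.conjSet u T ∈ Loc.Δ := by
  set PG := Loc.toPartialGroup with hPG
  have hTS : T ⊆ Loc.S := Loc.delta_sub_S hT
  have hsub : PG.conjSet u T ⊆ Loc.S := by
    rintro _ ⟨t, ht, rfl⟩
    exact Loc.conj_mem_S hu (hTS ht)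
  have hprodclosed : ∀ v ∈ PG.D, (∀ x ∈ v, x ∈ PG.conjSet u T) →
      PG.prod v ∈ PG.conjSet u T := by
    intro v
    induction v with
    | nil =>
      intro _ _
      exact ⟨PG.one, Loc.delta_one hT, (PG.conj_one_mem u).2⟩
    | cons a rest ih =>
      intro hv hvm
      have hrest : rest ∈ PG.D := (PG.append_closed [a] rest (by simpa using hv)).2
      have hPr : PG.prod rest ∈ PG.conjSet u T :=
        ih hrest (fun x hx => hvm x (List.mem_cons_of_mem a hx))
      obtain ⟨t2, ht2, he2⟩ := hPr
      obtain ⟨t1, ht1, he1⟩ := hvm a List.mem_cons_self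
      have pa := PG.prod_assoc [a] rest [] (by simpa using hv)
      simp only [List.cons_append, List.nil_append, List.append_nil] at pa
      have hpair := Loc.sconj_pair hu (hTS ht1) (hTS ht2)
      have ht12 : PG.prod [t1, t2] ∈ T := Loc.delta_prod hT (by
        intro z hz
        simp only [List.mem_cons, List.not_mem_nil, or_false] at hz
        rcases hz with rfl | rfl
        · exact ht1
        · exact ht2)
      refine ⟨PG.prod [t1, t2], ht12, ?_⟩
      rw [← hpair.2, he1, he2, pa.2]
  refine Loc.L3 _ hsub ⟨⟨⟨PG.conj u PG.one, PG.one, Loc.delta_one hT, rfl⟩, ?_, hprodclosed⟩, ?_⟩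
    ⟨T, hT, u, ?_, subset_rfl⟩
  · rintro _ ⟨t, ht, rfl⟩
    exact ⟨PG.inv t, Loc.delta_inv hT ht,
      (PG.conj_inv_val (Loc.dset_of_S hu (hTS ht))).2⟩
  · intro w hw
    exact Loc.S_words (fun x hx => hsub (hw x hx))
  · exact fun t ht => Loc.dset_of_S hu (hTS ht)

end Locality

namespace Locality

variable {L : Type u} (Loc : Locality L)

/-- `sg = g·s^g` for `s ∈ S_g`. -/
lemma swap_Sg {g s : L} (hs : s ∈ Loc.Sg g) :
    [s, g] ∈ Loc.toPartialGroup.D ∧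
    [g, Loc.toPartialGroup.prod [Loc.toPartialGroup.inv g, s, g]] ∈ Loc.toPartialGroup.D ∧
      Loc.toPartialGroup.prod [s, g] =
        Loc.toPartialGroup.prod [g, Loc.toPartialGroup.prod [Loc.toPartialGroup.inv g, s, g]] := by
  set PG := Loc.toPartialGroup with hPG
  obtain ⟨Y0, Y1, Y2, Y3, m0, m1, m2, m3, d0, e0, d1, e1, d2, e2, dx, ex⟩ := Loc.sg_chain hs
  have hsg : [s, g] ∈ PG.D := Loc.chain2 m1 m2 m3 d1 e1 d2 e2
  have hW : [g, PG.inv g, s, g] ∈ PG.D := Loc.chain4 m1 m0 m1 m2 m3 dx ex d0 e0 d1 e1 d2 e2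
  have n1 := PG.prod_assoc [] [g, PG.inv g] [s, g] (by simpa using hW)
  simp only [List.cons_append, List.nil_append, List.append_nil] at n1
  rw [(PG.mul_inv_pair g).2] at n1
  have u1 := PG.prod_assoc [] [] [s, g] (by simpa using hsg)
  simp only [List.cons_append, List.nil_append, List.append_nil] at u1
  rw [← PG.one_def] at u1
  have m1' := PG.prod_assoc [g] [PG.inv g, s, g] [] (by simpa using hW)
  simp only [List.cons_append, List.nil_append, List.append_nil] at m1'
  exact ⟨hsg, m1'.1, by rw [u1.2, ← n1.2, m1'.2]⟩

/-- Multiplicativity of `c_g` on `S_g` (for a product staying in `S_g`). -/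
lemma conj_mul_of_Sg {g s t : L} (hs : s ∈ Loc.Sg g) (ht : t ∈ Loc.Sg g)
    (hst : Loc.toPartialGroup.prod [s, t] ∈ Loc.Sg g) :
    [Loc.toPartialGroup.conj g s, Loc.toPartialGroup.conj g t] ∈ Loc.toPartialGroup.D ∧
      Loc.toPartialGroup.prod [Loc.toPartialGroup.conj g s, Loc.toPartialGroup.conj g t]
        = Loc.toPartialGroup.conj g (Loc.toPartialGroup.prod [s, t]) := by
  set PG := Loc.toPartialGroup with hPG
  have hsS : s ∈ Loc.S := (Loc.mem_Sg_iff.1 hs).1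
  have htS : t ∈ Loc.S := (Loc.mem_Sg_iff.1 ht).1
  have hss : PG.conj g s ∈ Loc.S := (Loc.mem_Sg_iff.1 hs).2.2
  have hts : PG.conj g t ∈ Loc.S := (Loc.mem_Sg_iff.1 ht).2.2
  have hD2 : [PG.conj g s, PG.conj g t] ∈ PG.D := Loc.S_words (by
    intro z hz
    simp only [List.mem_cons, List.not_mem_nil, or_false] at hz
    rcases hz with rfl | rfl
    · exact hss
    · exact hts)
  obtain ⟨Ys0, Ys1, Ys2, Ys3, ms0, ms1, ms2, ms3, ds0, es0, ds1, es1, ds2, es2, dsx, esx⟩ :=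
    Loc.sg_chain hs
  obtain ⟨Yw0, Yw1, Yw2, Yw3, mw0, mw1, mw2, mw3, dw0, ew0, dw1, ew1, dw2, ew2, dwx, ewx⟩ :=
    Loc.sg_chain hst
  have sw_s := Loc.swap_Sg hs
  have sw_t := Loc.swap_Sg ht
  have sw_w := Loc.swap_Sg hst
  -- (γ) : [s, t, g] ∈ D
  have hYw1S : Yw1 ⊆ Loc.S := Loc.delta_sub_S mw1
  have hγ : [s, t, g] ∈ PG.D := by
    refine Loc.chain3 mw1 (Loc.sconj_delta mw1 hsS) mw2 mw3
      (fun z hz => Loc.dset_of_S hsS (hYw1S hz)) rfl ?_ ?_ dw2 ew2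
    · rintro _ ⟨z, hz, rfl⟩
      exact Loc.dset_of_S htS (Loc.conj_mem_S hsS (hYw1S hz))
    · show PG.conjSet t (PG.conjSet s Yw1) = Yw2
      unfold PartialGroup.conjSet
      rw [Set.image_image]
      rw [Set.image_congr (fun z hz => Loc.sconj_comp hsS htS (hYw1S hz))]
      exact ew1
  have c1 := PG.prod_assoc [] [s, t] [g] (by simpa using hγ)
  simp only [List.cons_append, List.nil_append, List.append_nil] at c1
  have c2 := PG.prod_assoc [s] [t, g] [] (by simpa using hγ)
  simp only [List.cons_append, List.nil_append, List.append_nil] at c2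
  -- (δ) : [s, g, t^g] ∈ D
  have hYs3S : Ys3 ⊆ Loc.S := Loc.delta_sub_S ms3
  have hδ : [s, g, PG.prod [PG.inv g, t, g]] ∈ PG.D := by
    refine Loc.chain3 ms1 ms2 ms3 (Loc.sconj_delta ms3 hts) ds1 es1 ds2 es2
      (fun z hz => Loc.dset_of_S hts (hYs3S hz)) rfl
  have dv1 := PG.prod_assoc [s] [g, PG.prod [PG.inv g, t, g]] [] (by simpa using hδ)
  simp only [List.cons_append, List.nil_append, List.append_nil] at dv1
  have dv2 := PG.prod_assoc [] [s, g] [PG.prod [PG.inv g, t, g]] (by simpa using hδ)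
  simp only [List.cons_append, List.nil_append, List.append_nil] at dv2
  -- (ε) : [g, s^g, t^g] ∈ D
  have hYs0S : Ys0 ⊆ Loc.S := Loc.delta_sub_S ms0
  have hε : [g, PG.prod [PG.inv g, s, g], PG.prod [PG.inv g, t, g]] ∈ PG.D := by
    refine Loc.chain3 ms1 ms0 (Loc.sconj_delta ms0 hss)
      (Loc.sconj_delta (Loc.sconj_delta ms0 hss) hts) dsx esx
      (fun z hz => Loc.dset_of_S hss (hYs0S hz)) rfl ?_ rfl
    rintro _ ⟨z, hz, rfl⟩
    exact Loc.dset_of_S hts (Loc.conj_mem_S hss (hYs0S hz))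
  have f1 := PG.prod_assoc [] [g, PG.prod [PG.inv g, s, g]] [PG.prod [PG.inv g, t, g]]
    (by simpa using hε)
  simp only [List.cons_append, List.nil_append, List.append_nil] at f1
  have f2 := PG.prod_assoc [g] [PG.prod [PG.inv g, s, g], PG.prod [PG.inv g, t, g]] []
    (by simpa using hε)
  simp only [List.cons_append, List.nil_append, List.append_nil] at f2
  -- chain of equalities
  have key : PG.prod [g, PG.prod [PG.prod [PG.inv g, s, g], PG.prod [PG.inv g, t, g]]]
      = PG.prod [g, PG.prod [PG.inv g, PG.prod [s, t], g]] := by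
    calc PG.prod [g, PG.prod [PG.prod [PG.inv g, s, g], PG.prod [PG.inv g, t, g]]]
        = PG.prod [g, PG.prod [PG.inv g, s, g], PG.prod [PG.inv g, t, g]] := f2.2.symm
      _ = PG.prod [PG.prod [g, PG.prod [PG.inv g, s, g]], PG.prod [PG.inv g, t, g]] := f1.2
      _ = PG.prod [PG.prod [s, g], PG.prod [PG.inv g, t, g]] := by rw [← sw_s.2.2]
      _ = PG.prod [s, g, PG.prod [PG.inv g, t, g]] := dv2.2.symm
      _ = PG.prod [s, PG.prod [g, PG.prod [PG.inv g, t, g]]] := dv1.2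
      _ = PG.prod [s, PG.prod [t, g]] := by rw [← sw_t.2.2]
      _ = PG.prod [s, t, g] := c2.2.symm
      _ = PG.prod [PG.prod [s, t], g] := c1.2
      _ = PG.prod [g, PG.prod [PG.inv g, PG.prod [s, t], g]] := sw_w.2.2
  have hcancel := PG.cancel_left f2.1 sw_w.2.1 key
  exact ⟨hD2, hcancel⟩

/-- (F): the conjugate of a `Δ`-group `P ≤ S_g` is again in `Δ`. -/
lemma conj_delta_Sg {g : L} {P : Set L} (hP : P ∈ Loc.Δ) (hPg : P ⊆ Loc.Sg g) :
    Loc.toPartialGroup.conjSet g P ∈ Loc.Δ := by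
  set PG := Loc.toPartialGroup with hPG
  have hsub : PG.conjSet g P ⊆ Loc.S := by
    rintro _ ⟨s, hs, rfl⟩
    exact (Loc.mem_Sg_iff.1 (hPg hs)).2.2
  have hprodclosed : ∀ v ∈ PG.D, (∀ x ∈ v, x ∈ PG.conjSet g P) →
      PG.prod v ∈ PG.conjSet g P := by
    intro v
    induction v with
    | nil =>
      intro _ _
      exact ⟨PG.one, Loc.delta_one hP, (PG.conj_one_mem g).2⟩
    | cons a rest ih =>
      intro hv hvm
      have hrest : rest ∈ PG.D := (PG.append_closed [a] rest (by simpa using hv)).2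
      have hPr : PG.prod rest ∈ PG.conjSet g P :=
        ih hrest (fun x hx => hvm x (List.mem_cons_of_mem a hx))
      obtain ⟨t2, ht2, he2⟩ := hPr
      obtain ⟨t1, ht1, he1⟩ := hvm a List.mem_cons_self
      have pa := PG.prod_assoc [a] rest [] (by simpa using hv)
      simp only [List.cons_append, List.nil_append, List.append_nil] at pa
      have ht12 : PG.prod [t1, t2] ∈ P := Loc.delta_prod hP (by
        intro z hz
        simp only [List.mem_cons, List.not_mem_nil, or_false] at hz
        rcases hz with rfl | rfl
        · exact ht1
        · exact ht2)
      have hpair := Loc.conj_mul_of_Sg (hPg ht1) (hPg ht2) (hPg ht12)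
      refine ⟨PG.prod [t1, t2], ht12, ?_⟩
      rw [← hpair.2, he1, he2, pa.2]
  refine Loc.L3 _ hsub ⟨⟨⟨PG.conj g PG.one, PG.one, Loc.delta_one hP, rfl⟩, ?_, hprodclosed⟩, ?_⟩
    ⟨P, hP, g, ?_, subset_rfl⟩
  · rintro _ ⟨s, hs, rfl⟩
    exact ⟨PG.inv s, Loc.delta_inv hP hs,
      (PG.conj_inv_val ((Loc.mem_Sg_iff.1 (hPg hs)).2.1)).2⟩
  · intro w hw
    exact Loc.S_words (fun x hx => hsub (hw x hx))
  · exact fun s hs => (Loc.mem_Sg_iff.1 (hPg hs)).2.1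

end Locality

/-- the relation `↑_K` on `L∘Δ` is reflexive and transitive, and
`(f,P) ↑_K (f,S_f)` via `(1,1)` for every `(f,P) ∈ L∘Δ`. -/
theorem upRel_refl_trans {L : Type u} (Loc : Locality L) (K : Set L)
    (hK : Loc.toPartialGroup.IsPartialNormal K) :
    (∀ fP ∈ Loc.LDelta, Loc.UpRel K fP fP) ∧
    (∀ fP gQ hR : L × Set L, fP ∈ Loc.LDelta → gQ ∈ Loc.LDelta → hR ∈ Loc.LDelta →
      Loc.UpRel K fP gQ → Loc.UpRel K gQ hR → Loc.UpRel K fP hR) ∧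
    (∀ fP ∈ Loc.LDelta,
      Loc.toPartialGroup.one ∈ Loc.toPartialGroup.NBetween K fP.2 (Loc.Sg fP.1) ∧
      Loc.toPartialGroup.one ∈ Loc.toPartialGroup.NBetween K
        (Loc.toPartialGroup.conjSet fP.1 fP.2)
        (Loc.toPartialGroup.conjSet fP.1 (Loc.Sg fP.1)) ∧
      [Loc.toPartialGroup.one, fP.1] ∈ Loc.toPartialGroup.D ∧
      [fP.1, Loc.toPartialGroup.one] ∈ Loc.toPartialGroup.D ∧
      Loc.toPartialGroup.prod [Loc.toPartialGroup.one, fP.1] =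
        Loc.toPartialGroup.prod [fP.1, Loc.toPartialGroup.one] ∧
      Loc.UpRel K fP (fP.1, Loc.Sg fP.1)) := by
  set PG := Loc.toPartialGroup with hPG
  -- 1 ∈ K
  have h1K : PG.one ∈ K := by
    obtain ⟨k, hk⟩ := hK.1.1
    have hki : PG.inv k ∈ K := hK.1.2.1 k hk
    have hD : [PG.inv k, k] ∈ PG.D := (PG.inv_mul_pair k).1
    have := hK.1.2.2 [PG.inv k, k] hD (by
      intro z hz
      simp only [List.mem_cons, List.not_mem_nil, or_false] at hz
      rcases hz with rfl | rfl
      · exact hki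
      · exact hk)
    rwa [(PG.inv_mul_pair k).2] at this
  have hNrefl : ∀ A B : Set L, A ⊆ B → PG.one ∈ PG.NBetween K A B := by
    intro A B hAB
    refine ⟨h1K, fun s _ => (PG.mem_Dset_one s).1, ?_⟩
    rw [PG.conjSet_one]
    exact hAB
  have hpair1 : ∀ a : L, [PG.one, a] ∈ PG.D ∧ [a, PG.one] ∈ PG.D ∧
      PG.prod [PG.one, a] = PG.prod [a, PG.one] := by
    intro a
    exact ⟨(PG.one_pair_left a).1, (PG.one_pair_right a).1,
      by rw [(PG.one_pair_left a).2, (PG.one_pair_right a).2]⟩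
  refine ⟨?_, ?_, ?_⟩
  · -- reflexivity
    intro fP _
    exact ⟨PG.one, hNrefl _ _ subset_rfl, PG.one, hNrefl _ _ subset_rfl,
      (hpair1 fP.1).1, (hpair1 fP.1).2.1, (hpair1 fP.1).2.2⟩
  · -- transitivity
    intro fP gQ hR hfP hgQ hhR hup1 hup2
    obtain ⟨x, hx, y, hy, hxg, hfy, heq1⟩ := hup1
    obtain ⟨x', hx', y', hy', hx'h, hgy', heq2⟩ := hup2
    have hPD : fP.2 ∈ Loc.Δ := hfP.1
    have hPSg : fP.2 ⊆ Loc.Sg fP.1 := hfP.2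
    have hQSg : gQ.2 ⊆ Loc.Sg gQ.1 := hgQ.2
    have hRSg : hR.2 ⊆ Loc.Sg hR.1 := hhR.2
    have hPS : fP.2 ⊆ Loc.S := fun s hs => (Loc.mem_Sg_iff.1 (hPSg hs)).1
    have hQS : gQ.2 ⊆ Loc.S := fun q hq => (Loc.mem_Sg_iff.1 (hQSg hq)).1
    have hRS : hR.2 ⊆ Loc.S := fun r hr => (Loc.mem_Sg_iff.1 (hRSg hr)).1
    have hQgS : PG.conjSet gQ.1 gQ.2 ⊆ Loc.S := by
      rintro _ ⟨q, hq, rfl⟩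
      exact (Loc.mem_Sg_iff.1 (hQSg hq)).2.2
    have hRhS : PG.conjSet hR.1 hR.2 ⊆ Loc.S := by
      rintro _ ⟨r, hr, rfl⟩
      exact (Loc.mem_Sg_iff.1 (hRSg hr)).2.2
    -- Δ-groups along x, x'
    have hP_Sgx : fP.2 ⊆ Loc.Sg x := fun s hs => Loc.mem_Sg_iff.2
      ⟨hPS hs, hx.2.1 hs, hQS (hx.2.2 ⟨s, hs, rfl⟩)⟩
    have mP1 : PG.conjSet x fP.2 ∈ Loc.Δ := Loc.conj_delta_Sg hPD hP_Sgx
    have hP1Q : PG.conjSet x fP.2 ⊆ gQ.2 := by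
      rintro _ ⟨s, hs, rfl⟩
      exact hx.2.2 ⟨s, hs, rfl⟩
    have hP1_Sgx' : PG.conjSet x fP.2 ⊆ Loc.Sg x' := fun r hr => Loc.mem_Sg_iff.2
      ⟨hQS (hP1Q hr), hx'.2.1 (hP1Q hr), hRS (hx'.2.2 ⟨r, hP1Q hr, rfl⟩)⟩
    have mP2 : PG.conjSet x' (PG.conjSet x fP.2) ∈ Loc.Δ := Loc.conj_delta_Sg mP1 hP1_Sgx'
    have hP2R : PG.conjSet x' (PG.conjSet x fP.2) ⊆ hR.2 := by
      rintro _ ⟨r, hr, rfl⟩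
      exact hx'.2.2 ⟨r, hP1Q hr, rfl⟩
    have hP2_Sgh : PG.conjSet x' (PG.conjSet x fP.2) ⊆ Loc.Sg hR.1 :=
      fun z hz => hRSg (hP2R hz)
    have mP3 : PG.conjSet hR.1 (PG.conjSet x' (PG.conjSet x fP.2)) ∈ Loc.Δ :=
      Loc.conj_delta_Sg mP2 hP2_Sgh
    -- Δ-groups along f, y, y'
    have mPf : PG.conjSet fP.1 fP.2 ∈ Loc.Δ := Loc.conj_delta_Sg hPD hPSg
    have hPfS : PG.conjSet fP.1 fP.2 ⊆ Loc.S := by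
      rintro _ ⟨s, hs, rfl⟩
      exact (Loc.mem_Sg_iff.1 (hPSg hs)).2.2
    have hPf_Sgy : PG.conjSet fP.1 fP.2 ⊆ Loc.Sg y := fun w hw => Loc.mem_Sg_iff.2
      ⟨hPfS hw, hy.2.1 hw, hQgS (hy.2.2 ⟨w, hw, rfl⟩)⟩
    have mPf1 : PG.conjSet y (PG.conjSet fP.1 fP.2) ∈ Loc.Δ := Loc.conj_delta_Sg mPf hPf_Sgy
    have hPf1Qg : PG.conjSet y (PG.conjSet fP.1 fP.2) ⊆ PG.conjSet gQ.1 gQ.2 := by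
      rintro _ ⟨w, hw, rfl⟩
      exact hy.2.2 ⟨w, hw, rfl⟩
    have hPf1_Sgy' : PG.conjSet y (PG.conjSet fP.1 fP.2) ⊆ Loc.Sg y' :=
      fun w hw => Loc.mem_Sg_iff.2 ⟨hQgS (hPf1Qg hw), hy'.2.1 (hPf1Qg hw),
        hRhS (hy'.2.2 ⟨w, hPf1Qg hw, rfl⟩)⟩
    have mPf2 : PG.conjSet y' (PG.conjSet y (PG.conjSet fP.1 fP.2)) ∈ Loc.Δ :=
      Loc.conj_delta_Sg mPf1 hPf1_Sgy'
    -- the two composite words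
    have hdPx : fP.2 ⊆ PG.Dset x := hx.2.1
    have hdP1x' : PG.conjSet x fP.2 ⊆ PG.Dset x' := fun r hr => hx'.2.1 (hP1Q hr)
    have hxx' : [x, x'] ∈ PG.D := Loc.chain2 hPD mP1 mP2 hdPx rfl hdP1x' rfl
    have hdPfy : PG.conjSet fP.1 fP.2 ⊆ PG.Dset y := hy.2.1
    have hdPf1y' : PG.conjSet y (PG.conjSet fP.1 fP.2) ⊆ PG.Dset y' :=
      fun w hw => hy'.2.1 (hPf1Qg hw)
    have hyy' : [y, y'] ∈ PG.D := Loc.chain2 mPf mPf1 mPf2 hdPfy rfl hdPf1y' rfl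
    have hx''K : PG.prod [x, x'] ∈ K := hK.1.2.2 [x, x'] hxx' (by
      intro z hz
      simp only [List.mem_cons, List.not_mem_nil, or_false] at hz
      rcases hz with rfl | rfl
      · exact hx.1
      · exact hx'.1)
    have hy''K : PG.prod [y, y'] ∈ K := hK.1.2.2 [y, y'] hyy' (by
      intro z hz
      simp only [List.mem_cons, List.not_mem_nil, or_false] at hz
      rcases hz with rfl | rfl
      · exact hy.1
      · exact hy'.1)
    have ipx := PG.inv_pair_eq hxx'
    have ipy := PG.inv_pair_eq hyy'
    -- conjugation by x'' = x x'
    have hxconj : ∀ s ∈ fP.2, s ∈ PG.Dset (PG.prod [x, x']) ∧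
        PG.conj (PG.prod [x, x']) s ∈ hR.2 := by
      intro s hs
      have cbx := PG.conj_back (g := x) (A := fP.2) hdPx
      have cbx' := PG.conj_back (g := x') (A := PG.conjSet x fP.2) hdP1x'
      have hV : [PG.inv x', PG.inv x, s, x, x'] ∈ PG.D := by
        refine Loc.chain5 mP2 mP1 hPD hPD mP1 mP2 cbx'.1 cbx'.2 cbx.1 cbx.2
          (Loc.conj_self_delta hPD hs).1 (Loc.conj_self_delta hPD hs).2 hdPx rfl hdP1x' rfl
      have F1 := PG.prod_assoc [] [PG.inv x', PG.inv x] [s, x, x'] (by simpa using hV)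
      simp only [List.cons_append, List.nil_append, List.append_nil] at F1
      have F2 := PG.prod_assoc [PG.prod [PG.inv x', PG.inv x], s] [x, x'] [] (by simpa using F1.1)
      simp only [List.cons_append, List.nil_append, List.append_nil] at F2
      have F3 := PG.prod_assoc [PG.inv x'] [PG.inv x, s, x] [x'] (by simpa using hV)
      simp only [List.cons_append, List.nil_append, List.append_nil] at F3
      rw [ipx.2] at F1 F2
      constructor
      · exact F2.1
      · have hval : PG.conj (PG.prod [x, x']) s
            = PG.prod [PG.inv x', PG.prod [PG.inv x, s, x], x'] := by
          show PG.prod [PG.inv (PG.prod [x, x']), s, PG.prod [x, x']] = _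
          rw [← F2.2, ← F1.2, F3.2]
        rw [hval]
        exact hx'.2.2 ⟨PG.prod [PG.inv x, s, x], hx.2.2 ⟨s, hs, rfl⟩, rfl⟩
    -- conjugation by y'' = y y'
    have hyconj : ∀ w ∈ PG.conjSet fP.1 fP.2, w ∈ PG.Dset (PG.prod [y, y']) ∧
        PG.conj (PG.prod [y, y']) w ∈ PG.conjSet hR.1 hR.2 := by
      intro w hw
      have cby := PG.conj_back (g := y) (A := PG.conjSet fP.1 fP.2) hdPfy
      have cby' := PG.conj_back (g := y') (A := PG.conjSet y (PG.conjSet fP.1 fP.2)) hdPf1y'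
      have hV : [PG.inv y', PG.inv y, w, y, y'] ∈ PG.D := by
        refine Loc.chain5 mPf2 mPf1 mPf mPf mPf1 mPf2 cby'.1 cby'.2 cby.1 cby.2
          (Loc.conj_self_delta mPf hw).1 (Loc.conj_self_delta mPf hw).2 hdPfy rfl hdPf1y' rfl
      have F1 := PG.prod_assoc [] [PG.inv y', PG.inv y] [w, y, y'] (by simpa using hV)
      simp only [List.cons_append, List.nil_append, List.append_nil] at F1
      have F2 := PG.prod_assoc [PG.prod [PG.inv y', PG.inv y], w] [y, y'] [] (by simpa using F1.1)
      simp only [List.cons_append, List.nil_append, List.append_nil] at F2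
      have F3 := PG.prod_assoc [PG.inv y'] [PG.inv y, w, y] [y'] (by simpa using hV)
      simp only [List.cons_append, List.nil_append, List.append_nil] at F3
      rw [ipy.2] at F1 F2
      constructor
      · exact F2.1
      · have hval : PG.conj (PG.prod [y, y']) w
            = PG.prod [PG.inv y', PG.prod [PG.inv y, w, y], y'] := by
          show PG.prod [PG.inv (PG.prod [y, y']), w, PG.prod [y, y']] = _
          rw [← F2.2, ← F1.2, F3.2]
        rw [hval]
        exact hy'.2.2 ⟨PG.prod [PG.inv y, w, y], hy.2.2 ⟨w, hw, rfl⟩, rfl⟩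
    -- the words [x,x',h], [x,g,y'], [f,y,y'] and the defining equation
    have hdP2h : PG.conjSet x' (PG.conjSet x fP.2) ⊆ PG.Dset hR.1 :=
      fun z hz => (Loc.mem_Sg_iff.1 (hRSg (hP2R hz))).2.1
    have hW3 : [x, x', hR.1] ∈ PG.D :=
      Loc.chain3 hPD mP1 mP2 mP3 hdPx rfl hdP1x' rfl hdP2h rfl
    have G3 := PG.prod_assoc [] [x, x'] [hR.1] (by simpa using hW3)
    simp only [List.cons_append, List.nil_append, List.append_nil] at G3
    have G4 := PG.prod_assoc [x] [x', hR.1] [] (by simpa using hW3)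
    simp only [List.cons_append, List.nil_append, List.append_nil] at G4
    have hP1_Sgg : PG.conjSet x fP.2 ⊆ Loc.Sg gQ.1 := fun r hr => hQSg (hP1Q hr)
    have mP1g : PG.conjSet gQ.1 (PG.conjSet x fP.2) ∈ Loc.Δ := Loc.conj_delta_Sg mP1 hP1_Sgg
    have hP1gQg : PG.conjSet gQ.1 (PG.conjSet x fP.2) ⊆ PG.conjSet gQ.1 gQ.2 :=
      PG.conjSet_mono hP1Q
    have hP1g_Sgy' : PG.conjSet gQ.1 (PG.conjSet x fP.2) ⊆ Loc.Sg y' :=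
      fun z hz => Loc.mem_Sg_iff.2 ⟨hQgS (hP1gQg hz), hy'.2.1 (hP1gQg hz),
        hRhS (hy'.2.2 ⟨z, hP1gQg hz, rfl⟩)⟩
    have mP1gy' : PG.conjSet y' (PG.conjSet gQ.1 (PG.conjSet x fP.2)) ∈ Loc.Δ :=
      Loc.conj_delta_Sg mP1g hP1g_Sgy'
    have hW5 : [x, gQ.1, y'] ∈ PG.D :=
      Loc.chain3 hPD mP1 mP1g mP1gy' hdPx rfl
        (fun r hr => (Loc.mem_Sg_iff.1 (hQSg (hP1Q hr))).2.1) rfl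
        (fun z hz => hy'.2.1 (hP1gQg hz)) rfl
    have G5a := PG.prod_assoc [x] [gQ.1, y'] [] (by simpa using hW5)
    simp only [List.cons_append, List.nil_append, List.append_nil] at G5a
    have G5b := PG.prod_assoc [] [x, gQ.1] [y'] (by simpa using hW5)
    simp only [List.cons_append, List.nil_append, List.append_nil] at G5b
    have hW4 : [fP.1, y, y'] ∈ PG.D :=
      Loc.chain3 hPD mPf mPf1 mPf2 (fun s hs => (Loc.mem_Sg_iff.1 (hPSg hs)).2.1) rfl
        hdPfy rfl hdPf1y' rfl
    have G6a := PG.prod_assoc [] [fP.1, y] [y'] (by simpa using hW4)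
    simp only [List.cons_append, List.nil_append, List.append_nil] at G6a
    have G6b := PG.prod_assoc [fP.1] [y, y'] [] (by simpa using hW4)
    simp only [List.cons_append, List.nil_append, List.append_nil] at G6b
    have heqfinal : PG.prod [PG.prod [x, x'], hR.1] = PG.prod [fP.1, PG.prod [y, y']] := by
      calc PG.prod [PG.prod [x, x'], hR.1] = PG.prod [x, x', hR.1] := G3.2.symm
        _ = PG.prod [x, PG.prod [x', hR.1]] := G4.2
        _ = PG.prod [x, PG.prod [gQ.1, y']] := by rw [heq2]
        _ = PG.prod [x, gQ.1, y'] := G5a.2.symm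
        _ = PG.prod [PG.prod [x, gQ.1], y'] := G5b.2
        _ = PG.prod [PG.prod [fP.1, y], y'] := by rw [heq1]
        _ = PG.prod [fP.1, y, y'] := G6a.2.symm
        _ = PG.prod [fP.1, PG.prod [y, y']] := G6b.2
    exact ⟨PG.prod [x, x'],
      ⟨hx''K, fun s hs => (hxconj s hs).1, by rintro _ ⟨s, hs, rfl⟩; exact (hxconj s hs).2⟩,
      PG.prod [y, y'],
      ⟨hy''K, fun w hw => (hyconj w hw).1, by rintro _ ⟨w, hw, rfl⟩; exact (hyconj w hw).2⟩,
      G3.1, G6b.1, heqfinal⟩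
  · -- (f,P) ↑ (f, S_f) via (1,1)
    intro fP hfP
    have hN1 : PG.one ∈ PG.NBetween K fP.2 (Loc.Sg fP.1) := hNrefl _ _ hfP.2
    have hN2 : PG.one ∈ PG.NBetween K (PG.conjSet fP.1 fP.2)
        (PG.conjSet fP.1 (Loc.Sg fP.1)) := hNrefl _ _ (PG.conjSet_mono hfP.2)
    exact ⟨hN1, hN2, (hpair1 fP.1).1, (hpair1 fP.1).2.1, (hpair1 fP.1).2.2,
      PG.one, hN1, PG.one, hN2, (hpair1 fP.1).1, (hpair1 fP.1).2.1, (hpair1 fP.1).2.2⟩
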